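/- Let $L_1, L_2 > 0$ and let $k_1, k_2$ be nonzero real numbers of opposite signs (i.e. $k_1 k_2 < 0$). Then for all continuous functions $f_1 : [0,L_1] \to \mathbb{R}$ and $f_2 : [0,L_2] \to \mathbb{R}$ there exists a unique pair of twice continuously differentiable functions $\psi_1 : [0,L_1] \to \mathbb{R}$ and $\psi_2 : [0,L_2] \to \mathbb{R}$ satisfying: $-k_1 \psi_1'' = f_1$ on $[0,L_1]$; $-k_2 \psi_2'' = f_2$ on $[0,L_2]$; the external Dirichlet condition $\psi_2(0) = 0$; the continuity conditions $\psi_1(0) = \psi_1(L_1) = \psi_2(L_2)$; and the Kirchhoff condition $k_1 \psi_1'(L_1) - k_1 \psi_1'(0) + k_2 \psi_2'(L_2) = 0$. -/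

import Mathlib

open Set intervalIntegral

lemma edge_primitives {L : ℝ} (hL : 0 < L) {g : ℝ → ℝ}
    (hg : ContinuousOn g (Set.Icc 0 L)) :
    ∃ F G : ℝ → ℝ, F 0 = 0 ∧ G 0 = 0 ∧
      (∀ x ∈ Set.Icc (0:ℝ) L, HasDerivAt F (g x) x) ∧
      (∀ x, HasDerivAt G (F x) x) ∧
      ∀ a b : ℝ,
        ContDiffOn ℝ 2 (fun x => b + a * x + G x) (Set.Icc 0 L) ∧
        (∀ x ∈ Set.Icc (0:ℝ) L,
          iteratedDerivWithin 2 (fun x => b + a * x + G x) (Set.Icc 0 L) x = g x) ∧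
        (∀ x ∈ Set.Icc (0:ℝ) L,
          derivWithin (fun x => b + a * x + G x) (Set.Icc 0 L) x = a + F x) := by
  have hs : UniqueDiffOn ℝ (Set.Icc (0:ℝ) L) := uniqueDiffOn_Icc hL
  set gE : ℝ → ℝ := Set.IccExtend hL.le ((Set.Icc (0:ℝ) L).restrict g) with hgEdef
  have hgE : Continuous gE := hg.restrict.Icc_extend'
  have hgEeq : ∀ x ∈ Set.Icc (0:ℝ) L, gE x = g x := fun x hx =>
    Set.IccExtend_of_mem hL.le _ hx
  set F : ℝ → ℝ := fun x => ∫ t in (0:ℝ)..x, gE t with hFdef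
  have hFd : ∀ x, HasDerivAt F (gE x) x := fun x =>
    (hgE.integral_hasStrictDerivAt 0 x).hasDerivAt
  have hF1 : ContDiff ℝ 1 F :=
    contDiff_one_iff_deriv.mpr ⟨fun x => (hFd x).differentiableAt,
      by rw [funext fun x => (hFd x).deriv]; exact hgE⟩
  set G : ℝ → ℝ := fun x => ∫ t in (0:ℝ)..x, F t with hGdef
  have hGd : ∀ x, HasDerivAt G (F x) x := fun x =>
    (hF1.continuous.integral_hasStrictDerivAt 0 x).hasDerivAt
  have hG2 : ContDiff ℝ 2 G := by
    rw [show (2 : WithTop ℕ∞) = 1 + 1 from rfl, contDiff_succ_iff_deriv]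
    refine ⟨fun x => (hGd x).differentiableAt, by simp, ?_⟩
    rw [funext fun x => (hGd x).deriv]; exact hF1
  refine ⟨F, G, intervalIntegral.integral_same, intervalIntegral.integral_same,
    fun x hx => by rw [← hgEeq x hx]; exact hFd x, hGd, fun a b => ?_⟩
  set ψ : ℝ → ℝ := fun x => b + a * x + G x with hψdef
  have hψd : ∀ x, HasDerivAt ψ (a + F x) x := by
    intro x
    have h1 : HasDerivAt (fun x : ℝ => b + a * x) a x := by
      simpa using ((hasDerivAt_id x).const_mul a).const_add b
    exact h1.add (hGd x)
  have hψ2 : ContDiff ℝ 2 ψ := by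
    refine ContDiff.add (ContDiff.add contDiff_const ?_) hG2
    exact (contDiff_id.const_smul a).of_le le_top |>.of_le le_top
  have hdW : ∀ x ∈ Set.Icc (0:ℝ) L, derivWithin ψ (Set.Icc 0 L) x = a + F x := by
    intro x hx
    rw [(hψd x).differentiableAt.derivWithin (hs x hx)]
    exact (hψd x).deriv
  refine ⟨hψ2.contDiffOn, ?_, hdW⟩
  intro x hx
  rw [iteratedDerivWithin_succ]
  have h2 : Set.EqOn (iteratedDerivWithin 1 ψ (Set.Icc 0 L)) (fun y => a + F y)
      (Set.Icc 0 L) := by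
    intro y hy
    rw [iteratedDerivWithin_one]
    exact hdW y hy
  rw [derivWithin_congr h2 (h2 hx)]
  have h3 : HasDerivAt (fun y => a + F y) (gE x) x := (hFd x).const_add a
  rw [h3.differentiableAt.derivWithin (hs x hx), h3.deriv]
  exact hgEeq x hx

lemma ode_rep {L : ℝ} (hL : 0 < L) {g φ F G : ℝ → ℝ}
    (hφ : ContDiffOn ℝ 2 φ (Set.Icc 0 L))
    (heq : ∀ x ∈ Set.Icc (0:ℝ) L, iteratedDerivWithin 2 φ (Set.Icc 0 L) x = g x)
    (hF : ∀ x ∈ Set.Icc (0:ℝ) L, HasDerivAt F (g x) x) (hF0 : F 0 = 0)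
    (hG : ∀ x, HasDerivAt G (F x) x) (hG0 : G 0 = 0) :
    (∀ x ∈ Set.Icc (0:ℝ) L,
      derivWithin φ (Set.Icc 0 L) x = derivWithin φ (Set.Icc 0 L) 0 + F x) ∧
    (∀ x ∈ Set.Icc (0:ℝ) L,
      φ x = φ 0 + derivWithin φ (Set.Icc 0 L) 0 * x + G x) := by
  have hs : UniqueDiffOn ℝ (Set.Icc (0:ℝ) L) := uniqueDiffOn_Icc hL
  have h0 : (0:ℝ) ∈ Set.Icc (0:ℝ) L := Set.left_mem_Icc.mpr hL.le
  set u : ℝ → ℝ := derivWithin φ (Set.Icc 0 L) with hudef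
  have hu1 : ContDiffOn ℝ 1 u (Set.Icc 0 L) :=
    hφ.derivWithin hs (by norm_num)
  have hud : DifferentiableOn ℝ u (Set.Icc 0 L) := hu1.differentiableOn one_ne_zero
  have huderiv : ∀ x ∈ Set.Icc (0:ℝ) L, derivWithin u (Set.Icc 0 L) x = g x := by
    intro x hx
    have h1 := iteratedDerivWithin_succ (n := 1) (f := φ) (s := Set.Icc 0 L)
    have h2 : Set.EqOn (iteratedDerivWithin 1 φ (Set.Icc 0 L)) u (Set.Icc 0 L) :=
      fun y hy => by rw [iteratedDerivWithin_one]
    rw [← derivWithin_congr h2 (h2 hx), ← h1]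
    exact heq x hx
  -- first conclusion
  have key1 : ∀ x ∈ Set.Icc (0:ℝ) L, u x - F x = u 0 := by
    have hvd : DifferentiableOn ℝ (fun x => u x - F x) (Set.Icc 0 L) :=
      hud.sub fun x hx => (hF x hx).differentiableAt.differentiableWithinAt
    have hv0 : ∀ x ∈ Set.Ico (0:ℝ) L,
        derivWithin (fun x => u x - F x) (Set.Icc 0 L) x = 0 := by
      intro x hx
      have hx' : x ∈ Set.Icc (0:ℝ) L := Set.mem_Icc_of_Ico hx
      rw [derivWithin_fun_sub (hud x hx')
        ((hF x hx').differentiableAt.differentiableWithinAt), huderiv x hx',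
        (hF x hx').differentiableAt.derivWithin (hs x hx'), (hF x hx').deriv, sub_self]
    intro x hx
    have := constant_of_derivWithin_zero hvd hv0 x hx
    simpa [hF0] using this
  have c1 : ∀ x ∈ Set.Icc (0:ℝ) L, u x = u 0 + F x := by
    intro x hx; have := key1 x hx; linarith
  refine ⟨c1, ?_⟩
  -- second conclusion
  have hφd : DifferentiableOn ℝ φ (Set.Icc 0 L) :=
    hφ.differentiableOn (by norm_num)
  have hlin : ∀ x : ℝ, HasDerivAt (fun y => u 0 * y + G y) (u 0 + F x) x := by
    intro x
    have h1 : HasDerivAt (fun y : ℝ => u 0 * y) (u 0) x := by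
      simpa using (hasDerivAt_id x).const_mul (u 0)
    exact h1.add (hG x)
  have key2 : ∀ x ∈ Set.Icc (0:ℝ) L, φ x - (u 0 * x + G x) = φ 0 := by
    have hwd : DifferentiableOn ℝ (fun x => φ x - (u 0 * x + G x)) (Set.Icc 0 L) :=
      hφd.sub fun x _ => (hlin x).differentiableAt.differentiableWithinAt
    have hw0 : ∀ x ∈ Set.Ico (0:ℝ) L,
        derivWithin (fun x => φ x - (u 0 * x + G x)) (Set.Icc 0 L) x = 0 := by
      intro x hx
      have hx' : x ∈ Set.Icc (0:ℝ) L := Set.mem_Icc_of_Ico hx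
      rw [derivWithin_fun_sub (hφd x hx')
        ((hlin x).differentiableAt.differentiableWithinAt),
        (hlin x).differentiableAt.derivWithin (hs x hx'), (hlin x).deriv]
      have := c1 x hx'
      simp only [hudef] at this
      rw [this]; ring
    intro x hx
    have := constant_of_derivWithin_zero hwd hw0 x hx
    simpa [hG0] using this
  intro x hx
  have := key2 x hx; linarith

/-- Classical solution of the two-phase tadpole network problem: the loop edge `e₁` of
length `L₁` (both endpoints at the internal vertex) with conductivity `k₁`, the tail edge
`e₂` of length `L₂` with conductivity `k₂`, Dirichlet condition at the external vertex
`x = 0` of the tail, continuity and Kirchhoff conditions at the internal vertex. -/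
def IsTadpoleSolution (L₁ L₂ k₁ k₂ : ℝ) (f₁ f₂ : ℝ → ℝ) (ψ₁ ψ₂ : ℝ → ℝ) : Prop :=
  ContDiffOn ℝ 2 ψ₁ (Set.Icc 0 L₁) ∧ ContDiffOn ℝ 2 ψ₂ (Set.Icc 0 L₂) ∧
  (∀ x ∈ Set.Icc (0 : ℝ) L₁, -(k₁ * iteratedDerivWithin 2 ψ₁ (Set.Icc 0 L₁) x) = f₁ x) ∧
  (∀ x ∈ Set.Icc (0 : ℝ) L₂, -(k₂ * iteratedDerivWithin 2 ψ₂ (Set.Icc 0 L₂) x) = f₂ x) ∧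
  ψ₂ 0 = 0 ∧
  ψ₁ 0 = ψ₁ L₁ ∧ ψ₁ L₁ = ψ₂ L₂ ∧
  k₁ * derivWithin ψ₁ (Set.Icc 0 L₁) L₁ - k₁ * derivWithin ψ₁ (Set.Icc 0 L₁) 0
    + k₂ * derivWithin ψ₂ (Set.Icc 0 L₂) L₂ = 0

/-- Well-posedness for a two-phase tadpole network (Theorem 4.1): for every pair of
conductivities `k₁, k₂` of opposite signs the problem is well-posed. -/
theorem stmt_9 (L₁ L₂ : ℝ) (hL₁ : 0 < L₁) (hL₂ : 0 < L₂)
    (k₁ k₂ : ℝ) (hk : k₁ * k₂ < 0)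
    (f₁ f₂ : ℝ → ℝ)
    (hf₁ : ContinuousOn f₁ (Set.Icc 0 L₁)) (hf₂ : ContinuousOn f₂ (Set.Icc 0 L₂)) :
    ∃ ψ₁ ψ₂ : ℝ → ℝ, IsTadpoleSolution L₁ L₂ k₁ k₂ f₁ f₂ ψ₁ ψ₂ ∧
      ∀ φ₁ φ₂ : ℝ → ℝ, IsTadpoleSolution L₁ L₂ k₁ k₂ f₁ f₂ φ₁ φ₂ →
        (∀ x ∈ Set.Icc (0 : ℝ) L₁, φ₁ x = ψ₁ x) ∧
        (∀ x ∈ Set.Icc (0 : ℝ) L₂, φ₂ x = ψ₂ x) := by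
  have hk₁ : k₁ ≠ 0 := fun h => by simp [h] at hk
  have hk₂ : k₂ ≠ 0 := fun h => by simp [h] at hk
  have h01 : (0:ℝ) ∈ Set.Icc (0:ℝ) L₁ := Set.left_mem_Icc.mpr hL₁.le
  have hL1m : L₁ ∈ Set.Icc (0:ℝ) L₁ := Set.right_mem_Icc.mpr hL₁.le
  have h02 : (0:ℝ) ∈ Set.Icc (0:ℝ) L₂ := Set.left_mem_Icc.mpr hL₂.le
  have hL2m : L₂ ∈ Set.Icc (0:ℝ) L₂ := Set.right_mem_Icc.mpr hL₂.le
  set g₁ : ℝ → ℝ := fun x => -(f₁ x) / k₁ with hg₁def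
  set g₂ : ℝ → ℝ := fun x => -(f₂ x) / k₂ with hg₂def
  have hg₁ : ContinuousOn g₁ (Set.Icc 0 L₁) := hf₁.neg.div_const k₁
  have hg₂ : ContinuousOn g₂ (Set.Icc 0 L₂) := hf₂.neg.div_const k₂
  obtain ⟨F₁, G₁, hF₁0, hG₁0, hF₁, hG₁, hedge₁⟩ := edge_primitives hL₁ hg₁
  obtain ⟨F₂, G₂, hF₂0, hG₂0, hF₂, hG₂, hedge₂⟩ := edge_primitives hL₂ hg₂
  set a₁ : ℝ := -G₁ L₁ / L₁ with ha₁def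
  set a₂ : ℝ := -(k₁ * F₁ L₁ + k₂ * F₂ L₂) / k₂ with ha₂def
  set b₁ : ℝ := G₂ L₂ + a₂ * L₂ with hb₁def
  obtain ⟨hc₁, hit₁, hdw₁⟩ := hedge₁ a₁ b₁
  obtain ⟨hc₂, hit₂, hdw₂⟩ := hedge₂ a₂ 0
  set ψ₁ : ℝ → ℝ := fun x => b₁ + a₁ * x + G₁ x with hψ₁def
  set ψ₂ : ℝ → ℝ := fun x => 0 + a₂ * x + G₂ x with hψ₂def
  have ha₁L : a₁ * L₁ + G₁ L₁ = 0 := by rw [ha₁def, div_mul_cancel₀ _ hL₁.ne']; ring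
  have ha₂k : k₂ * a₂ = -(k₁ * F₁ L₁ + k₂ * F₂ L₂) := by rw [ha₂def, mul_div_assoc', mul_div_cancel_left₀ _ hk₂]
  have hsol : IsTadpoleSolution L₁ L₂ k₁ k₂ f₁ f₂ ψ₁ ψ₂ := by
    refine ⟨hc₁, hc₂, ?_, ?_, ?_, ?_, ?_, ?_⟩
    · intro x hx; rw [hit₁ x hx]; simp only [hg₁def]; rw [mul_div_assoc', mul_div_cancel_left₀ _ hk₁, neg_neg]
    · intro x hx; rw [hit₂ x hx]; simp only [hg₂def]; rw [mul_div_assoc', mul_div_cancel_left₀ _ hk₂, neg_neg]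
    · simp [hψ₂def, hG₂0]
    · simp only [hψ₁def]; rw [mul_zero, hG₁0]; linarith
    · simp only [hψ₁def, hψ₂def, hb₁def]; linarith
    · rw [hdw₁ L₁ hL1m, hdw₁ 0 h01, hdw₂ L₂ hL2m, hF₁0]
      linarith [ha₂k]
  refine ⟨ψ₁, ψ₂, hsol, ?_⟩
  rintro φ₁ φ₂ ⟨hφ₁, hφ₂, heq₁, heq₂, hφ₂0, hφ₁per, hφ₁₂, hφkir⟩
  have hit₁' : ∀ x ∈ Set.Icc (0:ℝ) L₁,
      iteratedDerivWithin 2 φ₁ (Set.Icc 0 L₁) x = g₁ x := by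
    intro x hx
    have := heq₁ x hx
    simp only [hg₁def]; rw [eq_div_iff hk₁]
    linarith
  have hit₂' : ∀ x ∈ Set.Icc (0:ℝ) L₂,
      iteratedDerivWithin 2 φ₂ (Set.Icc 0 L₂) x = g₂ x := by
    intro x hx
    have := heq₂ x hx
    simp only [hg₂def]; rw [eq_div_iff hk₂]
    linarith
  obtain ⟨hrep₁d, hrep₁⟩ := ode_rep hL₁ hφ₁ hit₁' hF₁ hF₁0 hG₁ hG₁0
  obtain ⟨hrep₂d, hrep₂⟩ := ode_rep hL₂ hφ₂ hit₂' hF₂ hF₂0 hG₂ hG₂0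
  set c₁ : ℝ := derivWithin φ₁ (Set.Icc 0 L₁) 0 with hc₁def
  set c₂ : ℝ := derivWithin φ₂ (Set.Icc 0 L₂) 0 with hc₂def
  -- c₁ = a₁
  have hc₁eq : c₁ = a₁ := by
    have h1 := hrep₁ L₁ hL1m
    rw [← hφ₁per] at h1
    have : c₁ * L₁ = a₁ * L₁ := by linarith
    exact mul_right_cancel₀ hL₁.ne' this
  -- c₂ = a₂
  have hc₂eq : c₂ = a₂ := by
    have h1 := hrep₁d L₁ hL1m
    have h2 := hrep₂d L₂ hL2m
    rw [h1, h2] at hφkir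
    have : k₂ * c₂ = k₂ * a₂ := by rw [ha₂k]; ring_nf; ring_nf at hφkir; linarith
    exact mul_left_cancel₀ hk₂ this
  -- φ₁ L₁ = b₁
  have hφ₂eq : ∀ x ∈ Set.Icc (0:ℝ) L₂, φ₂ x = ψ₂ x := by
    intro x hx
    rw [hrep₂ x hx, hφ₂0, hc₂eq, hψ₂def]
  refine ⟨?_, hφ₂eq⟩
  have hφ₁0 : φ₁ 0 = b₁ := by
    have h1 : φ₁ L₁ = φ₁ 0 := by
      rw [hrep₁ L₁ hL1m, hc₁eq]; linarith
    have h2 : φ₁ L₁ = ψ₂ L₂ := by rw [hφ₁₂, hφ₂eq L₂ hL2m]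
    rw [h1] at h2
    rw [h2, hψ₂def, hb₁def]; ring
  intro x hx
  rw [hrep₁ x hx, hφ₁0, hc₁eq, hψ₁def]
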